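/- For any real q ≥ 2 and real p > 1/Φ (where Φ = (1+√5)/2 is the golden ratio), the zero λ(p,q) of λ^(q+1) - (p+1)·λ^q + p in (1,∞) satisfies λ(p,q) > p + 1 - 1/(p+1). -/

import Mathlib

theorem stmt_10 (p q : ℝ) (hq : 2 ≤ q) (hp : 1 / ((1 + Real.sqrt 5) / 2) < p)
    (L : ℝ) (hL : 1 < L)
    (hroot : L ^ (q + 1) - (p + 1) * L ^ q + p = 0) :
    p + 1 - 1 / (p + 1) < L := by
  by_contra hc
  push_neg at hc
  have h5 : Real.sqrt 5 ^ 2 = 5 := Real.sq_sqrt (by norm_num)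
  have h5' : 1 < Real.sqrt 5 := by nlinarith [Real.sqrt_nonneg 5]
  have hp' : (Real.sqrt 5 - 1) / 2 < p := by
    have heq : 1 / ((1 + Real.sqrt 5) / 2) = (Real.sqrt 5 - 1) / 2 := by
      rw [div_eq_iff (by positivity)]
      nlinarith
    linarith [heq ▸ hp]
  have hkey : 0 < p ^ 2 + p - 1 := by nlinarith
  have hp0 : (0:ℝ) < p := by nlinarith
  have hp1 : (0:ℝ) < p + 1 := by linarith
  have hL0 : (0:ℝ) < L := by linarith
  have hr : L ^ q * (p + 1 - L) = p := by
    have h1 : L ^ (q + 1) = L ^ q * L := by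
      rw [Real.rpow_add hL0, Real.rpow_one]
    nlinarith [h1]
  have h2 : L ^ (2:ℝ) ≤ L ^ q := (Real.rpow_le_rpow_left_iff hL).mpr hq
  have h3 : L ^ (2:ℝ) = L * L := by
    rw [show (2:ℝ) = ((2:ℕ):ℝ) by norm_num, Real.rpow_natCast]; ring
  have hcc : 0 < p + 1 - L := by
    have h1p : (0:ℝ) < 1 / (p + 1) := by positivity
    linarith
  have h4 : L * L * (p + 1 - L) ≤ p := by
    have := mul_le_mul_of_nonneg_right (h3 ▸ h2) (le_of_lt hcc)
    linarith [hr]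
  have hc2 : L * (p + 1) ≤ (p + 1) ^ 2 - 1 := by
    have heq : (p + 1 - 1 / (p + 1)) * (p + 1) = (p + 1) ^ 2 - 1 := by
      field_simp
    nlinarith [mul_le_mul_of_nonneg_right hc (le_of_lt hp1)]
  nlinarith [h4, hc2, hkey, mul_pos (sub_pos.mpr hL) hcc, sq_nonneg (L - 1),
    mul_nonneg (sub_nonneg.mpr hc2) (sub_pos.mpr hL).le,
    mul_pos hp0 hp1, mul_pos (mul_pos hp0 hp1) hp1]
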